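/- For natural numbers n ≥ 2 and m ≥ 0: if n > m then the join of 1^n and 1^m 2 in the Young–Fibonacci lattice equals 2^{m+1} 1^{n−m−1}, and if n ≤ m then it equals 2^{n−1} 1^{m−n+1} 2. -/

import Mathlib

inductive YFDigit : Type
  | one : YFDigit
  | two : YFDigit
  deriving DecidableEq, Repr

abbrev YFWord := List YFDigit

namespace YFWord

/-- value of a digit -/
def digitVal : YFDigit → ℕ
  | .one => 1
  | .two => 2

/-- digit sum of a word -/
def dsum (v : YFWord) : ℕ := (v.map digitVal).sum

/-- number of 2's in a word -/
def twos (v : YFWord) : ℕ := v.count YFDigit.two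

/-- longest common prefix of two lists -/
def commonPrefix : YFWord → YFWord → YFWord
  | a :: x, b :: y => if a = b then a :: commonPrefix x y else []
  | _, _ => []

/-- longest common suffix -/
def lcs (x y : YFWord) : YFWord := (commonPrefix x.reverse y.reverse).reverse

/-- the prefix of `x` remaining after deleting the longest common suffix of `x` and `y` -/
def rem (x y : YFWord) : YFWord := x.take (x.length - (lcs x y).length)

/-- the Young–Fibonacci order: x ≤ y iff, after removing the longest common suffix,
the remaining prefix of `y` has at least as many 2's as the remaining prefix of `x` has digits -/
def yfLE (x y : YFWord) : Prop := (rem x y).length ≤ twos (rem y x)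

/-- strict Young–Fibonacci order -/
def yfLT (x y : YFWord) : Prop := yfLE x y ∧ ¬ yfLE y x

/-- `y` covers `x` in the Young–Fibonacci order -/
def covers (x y : YFWord) : Prop := yfLT x y ∧ ∀ z, ¬ (yfLT x z ∧ yfLT z y)

end YFWord

open YFWord

namespace YFWord

lemma twos_append (a b : YFWord) : twos (a ++ b) = twos a + twos b := by
  simp [twos, List.count_append]

lemma twos_le_length (v : YFWord) : twos v ≤ v.length := List.count_le_length

@[simp] lemma twos_replicate_one (k : ℕ) : twos (List.replicate k YFDigit.one) = 0 := by
  simp [twos, List.count_replicate]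

@[simp] lemma twos_replicate_two (k : ℕ) : twos (List.replicate k YFDigit.two) = k := by
  simp [twos, List.count_replicate]

lemma commonPrefix_comm (a b : YFWord) : commonPrefix a b = commonPrefix b a := by
  induction a generalizing b with
  | nil => cases b <;> rfl
  | cons c x ih =>
    cases b with
    | nil => rfl
    | cons d y =>
      simp only [commonPrefix]
      by_cases h : c = d
      · subst h; simp [ih]
      · rw [if_neg h, if_neg (Ne.symm h)]

lemma commonPrefix_prefix_left (a b : YFWord) : commonPrefix a b <+: a := by
  induction a generalizing b with
  | nil => cases b <;> simp [commonPrefix]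
  | cons c x ih =>
    cases b with
    | nil => simp [commonPrefix]
    | cons d y =>
      simp only [commonPrefix]
      by_cases h : c = d
      · rw [if_pos h]
        exact List.cons_prefix_cons.mpr ⟨rfl, ih y⟩
      · rw [if_neg h]; exact List.nil_prefix

lemma prefix_commonPrefix {p a b : YFWord} (h1 : p <+: a) (h2 : p <+: b) :
    p <+: commonPrefix a b := by
  induction p generalizing a b with
  | nil => exact List.nil_prefix
  | cons c p' ih =>
    cases a with
    | nil => exact absurd h1 (by simp)
    | cons d a' =>
      cases b with
      | nil => exact absurd h2 (by simp)
      | cons e b' =>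
        rw [List.cons_prefix_cons] at h1 h2
        obtain ⟨rfl, h1⟩ := h1
        obtain ⟨rfl, h2⟩ := h2
        simp only [commonPrefix, if_pos rfl]
        exact List.cons_prefix_cons.mpr ⟨rfl, ih h1 h2⟩

lemma lcs_suffix_left (x y : YFWord) : lcs x y <:+ x := by
  have h := List.reverse_suffix.mpr (commonPrefix_prefix_left x.reverse y.reverse)
  simpa [lcs] using h

lemma lcs_comm (x y : YFWord) : lcs x y = lcs y x :=
  congrArg List.reverse (commonPrefix_comm _ _)

lemma lcs_suffix_right (x y : YFWord) : lcs x y <:+ y := by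
  rw [lcs_comm]; exact lcs_suffix_left y x

lemma suffix_lcs {s x y : YFWord} (hx : s <:+ x) (hy : s <:+ y) : s <:+ lcs x y := by
  have hp : s.reverse <+: commonPrefix x.reverse y.reverse :=
    prefix_commonPrefix (List.reverse_prefix.mpr hx) (List.reverse_prefix.mpr hy)
  have h := List.reverse_suffix.mpr hp
  simpa [lcs] using h

lemma length_rem (x y : YFWord) : (rem x y).length = x.length - (lcs x y).length := by
  rw [rem, List.length_take]; omega

lemma take_sub_length (y' s : YFWord) :
    (y' ++ s).take ((y' ++ s).length - s.length) = y' := by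
  rw [List.length_append, Nat.add_sub_cancel, List.take_left]

lemma yfLE_iff (x y : YFWord) :
    yfLE x y ↔ ∃ s, s <:+ x ∧ s <:+ y ∧
      x.length - s.length ≤ twos (y.take (y.length - s.length)) := by
  constructor
  · intro h
    refine ⟨lcs x y, lcs_suffix_left x y, lcs_suffix_right x y, ?_⟩
    rw [yfLE, length_rem, rem, lcs_comm y x] at h
    exact h
  · rintro ⟨s, hsx, hsy, h⟩
    obtain ⟨t, ht⟩ := suffix_lcs hsx hsy
    obtain ⟨y', hy'⟩ := lcs_suffix_right x y
    rw [yfLE, length_rem, rem, lcs_comm y x]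
    have e1 : y.take (y.length - (lcs x y).length) = y' := by
      have h5 := take_sub_length y' (lcs x y)
      rwa [hy'] at h5
    have e2 : y.take (y.length - s.length) = y' ++ t := by
      have h5 := take_sub_length (y' ++ t) s
      rwa [List.append_assoc, ht, hy'] at h5
    rw [e2, twos_append] at h
    rw [e1]
    have h3 := twos_le_length t
    have h4 : (lcs x y).length = t.length + s.length := by
      rw [← ht]; simp
    omega

lemma yfLE_intro {x : YFWord} (s y' : YFWord) (h1 : s <:+ x)
    (h2 : x.length - s.length ≤ twos y') : yfLE x (y' ++ s) := by
  rw [yfLE_iff]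
  exact ⟨s, h1, List.suffix_append y' s, by rwa [take_sub_length]⟩

lemma yfLE_of_le {x y : YFWord} (h : x.length ≤ twos y) : yfLE x y := by
  rw [yfLE_iff]
  exact ⟨[], List.nil_suffix, List.nil_suffix, by simpa using h⟩

lemma suffix_replicate {s : YFWord} {n : ℕ} {a : YFDigit}
    (h : s <:+ List.replicate n a) :
    s = List.replicate s.length a ∧ s.length ≤ n := by
  constructor
  · exact List.eq_replicate_length.mpr fun b hb => List.eq_of_mem_replicate (h.subset hb)
  · simpa using h.length_le

lemma suffix_concat {s w : YFWord} {d : YFDigit} (h : s <:+ w ++ [d]) :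
    s = [] ∨ ∃ s', s' <:+ w ∧ s = s' ++ [d] := by
  rcases List.eq_nil_or_concat s with rfl | ⟨s', x, rfl⟩
  · exact Or.inl rfl
  · right
    obtain ⟨p, hp⟩ := h
    have h2 := congrArg List.reverse hp
    simp only [List.concat_eq_append, List.reverse_append, List.reverse_cons,
      List.reverse_nil, List.nil_append, List.cons_append, List.append_assoc] at h2
    injection h2 with h2a h2b
    subst h2a
    refine ⟨s', ?_, List.concat_eq_append⟩
    rw [← List.reverse_prefix]
    exact ⟨p.reverse, h2b⟩

lemma not_suffix_one_two {y s' : YFWord} {a : ℕ} (ha : 1 ≤ a)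
    (h1 : List.replicate a YFDigit.one <:+ y)
    (h2 : s' ++ [YFDigit.two] <:+ y) : False := by
  rcases List.suffix_or_suffix_of_suffix h1 h2 with h | h
  · obtain ⟨a', rfl⟩ : ∃ a', a = a' + 1 := ⟨a - 1, by omega⟩
    obtain ⟨p, hp⟩ := h
    have h2 := congrArg List.reverse hp
    simp [List.replicate_succ', List.reverse_append] at h2
  · have : YFDigit.two ∈ List.replicate a YFDigit.one :=
      h.subset (by simp)
    exact absurd (List.eq_of_mem_replicate this) (by simp)

lemma elim_ones {n : ℕ} {y : YFWord} (h : yfLE (List.replicate n YFDigit.one) y) :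
    ∃ a y', a ≤ n ∧ y = y' ++ List.replicate a YFDigit.one ∧ n - a ≤ twos y' := by
  rw [yfLE_iff] at h
  obtain ⟨s, hsx, hsy, hle⟩ := h
  obtain ⟨hs, hlen⟩ := suffix_replicate hsx
  obtain ⟨y', rfl⟩ := hsy
  rw [take_sub_length, List.length_replicate] at hle
  exact ⟨s.length, y', hlen, by rw [← hs], hle⟩

lemma elim_onestwo {m : ℕ} {y : YFWord}
    (h : yfLE (List.replicate m YFDigit.one ++ [YFDigit.two]) y) :
    (m + 1 ≤ twos y) ∨
    ∃ b y', b ≤ m ∧ y = y' ++ (List.replicate b YFDigit.one ++ [YFDigit.two]) ∧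
      m - b ≤ twos y' := by
  rw [yfLE_iff] at h
  obtain ⟨s, hsx, hsy, hle⟩ := h
  rcases suffix_concat hsx with rfl | ⟨s', hs', rfl⟩
  · left
    simp only [List.length_nil, Nat.sub_zero, List.take_length, List.length_append,
      List.length_replicate, List.length_cons] at hle
    omega
  · right
    obtain ⟨hs'', hlen'⟩ := suffix_replicate hs'
    obtain ⟨y', rfl⟩ := hsy
    rw [take_sub_length] at hle
    simp only [List.length_append, List.length_replicate, List.length_cons,
      List.length_nil] at hle
    exact ⟨s'.length, y', hlen', by rw [← hs''], by omega⟩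

end YFWord



/-- `j` is the least upper bound of `u` and `v` in the Young–Fibonacci order -/
def isJoin (u v j : YFWord) : Prop :=
  yfLE u j ∧ yfLE v j ∧ ∀ y : YFWord, yfLE u y → yfLE v y → yfLE j y

theorem yf_join_ones_onestwo (n m : ℕ) (hn : 2 ≤ n) :
    (m < n → isJoin (List.replicate n YFDigit.one)
        (List.replicate m YFDigit.one ++ [YFDigit.two])
        (List.replicate (m + 1) YFDigit.two ++ List.replicate (n - m - 1) YFDigit.one)) ∧
    (n ≤ m → isJoin (List.replicate n YFDigit.one)
        (List.replicate m YFDigit.one ++ [YFDigit.two])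
        (List.replicate (n - 1) YFDigit.two ++ List.replicate (m - n + 1) YFDigit.one
          ++ [YFDigit.two])) := by
  constructor
  · -- case m < n
    intro hmn
    refine ⟨?_, ?_, ?_⟩
    · -- 1^n ≤ j
      apply yfLE_intro (List.replicate (n - m - 1) YFDigit.one)
        (List.replicate (m + 1) YFDigit.two)
      · exact ⟨List.replicate (m + 1) YFDigit.one, by
          rw [← List.replicate_add]; congr 1; omega⟩
      · simp only [List.length_replicate, twos_replicate_two]; omega
    · -- 1^m 2 ≤ j
      apply yfLE_of_le
      simp only [List.length_append, List.length_replicate, List.length_cons,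
        List.length_nil, twos_append, twos_replicate_two, twos_replicate_one]
      omega
    · -- least
      intro y h1 h2
      obtain ⟨a, y1, han, rfl, hU⟩ := elim_ones h1
      by_cases hc : a ≤ n - m - 1
      · -- use suffix 1^a
        apply yfLE_intro (List.replicate a YFDigit.one) y1
        · exact ⟨List.replicate (m + 1) YFDigit.two ++
            List.replicate (n - m - 1 - a) YFDigit.one, by
              rw [List.append_assoc, ← List.replicate_add]; congr 2; omega⟩
        · simp only [List.length_append, List.length_replicate]; omega
      · -- a > n-m-1 ; need m+1 ≤ twos y1
        have hT : m + 1 ≤ twos y1 := by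
          rcases elim_onestwo h2 with hT | ⟨b, y2, hbm, heq, hV⟩
          · rwa [twos_append, twos_replicate_one, Nat.add_zero] at hT
          · exact absurd heq (fun heq => not_suffix_one_two (a := a) (by omega)
              (List.suffix_append _ _) ⟨y2, heq.symm⟩)
        have hsplit : y1 ++ List.replicate a YFDigit.one =
            (y1 ++ List.replicate (a - (n - m - 1)) YFDigit.one) ++
              List.replicate (n - m - 1) YFDigit.one := by
          rw [List.append_assoc, ← List.replicate_add]; congr 2; omega
        rw [hsplit]
        apply yfLE_intro
        · exact List.suffix_append _ _
        · simp only [List.length_append, List.length_replicate, twos_append,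
            twos_replicate_one]
          omega
  · -- case n ≤ m
    intro hnm
    refine ⟨?_, ?_, ?_⟩
    · -- 1^n ≤ j
      apply yfLE_of_le
      simp only [List.length_replicate, twos_append, twos_replicate_two,
        twos_replicate_one, twos]
      simp [List.count_cons]
      omega
    · -- 1^m 2 ≤ j
      rw [List.append_assoc]
      apply yfLE_intro (List.replicate (m - n + 1) YFDigit.one ++ [YFDigit.two])
        (List.replicate (n - 1) YFDigit.two)
      · exact ⟨List.replicate (n - 1) YFDigit.one, by
          rw [← List.append_assoc, ← List.replicate_add]; congr 2; omega⟩
      · simp only [List.length_append, List.length_replicate, List.length_cons,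
          List.length_nil, twos_replicate_two]
        omega
    · intro y h1 h2
      obtain ⟨a, y1, han, rfl, hU⟩ := elim_ones h1
      rcases elim_onestwo h2 with hT | ⟨b, y2, hbm, heq, hV⟩
      · -- m+1 ≤ twos y : use empty suffix
        apply yfLE_of_le
        simp only [List.length_append, List.length_replicate, List.length_cons,
          List.length_nil]
        omega
      · -- y ends with 1^b 2
        have ha0 : a = 0 := by
          by_contra h
          exact not_suffix_one_two (Nat.one_le_iff_ne_zero.mpr h)
            (List.suffix_append _ _) ⟨y2, heq.symm⟩
        subst ha0
        have hty : twos y1 = twos y2 + 1 := by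
          have := congrArg twos heq
          simpa [twos_append, twos_replicate_one, twos, List.count_replicate, List.count_cons] using this
        rw [heq]
        have hsplit : y2 ++ (List.replicate b YFDigit.one ++ [YFDigit.two]) =
            (y2 ++ List.replicate (b - min b (m - n + 1)) YFDigit.one) ++
              (List.replicate (min b (m - n + 1)) YFDigit.one ++ [YFDigit.two]) := by
          rw [List.append_assoc, ← List.append_assoc (List.replicate _ _),
            ← List.replicate_add]
          congr 3
          omega
        rw [hsplit]
        apply yfLE_intro
        · refine ⟨List.replicate (n - 1) YFDigit.two ++
            List.replicate (m - n + 1 - min b (m - n + 1)) YFDigit.one, ?_⟩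
          rw [List.append_assoc, ← List.append_assoc (List.replicate (m - n + 1 - _) _),
            ← List.replicate_add, List.append_assoc]
          congr 3
          omega
        · simp only [List.length_append, List.length_replicate, List.length_cons,
            List.length_nil, twos_append, twos_replicate_one]
          omega
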